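/- arXiv:math-ph/0307063 — 4 statements merged into one kernel-verified Lean document; each statement's English description precedes it below -/
import Mathlib

section
/- Let (q, p, H) solve the Painlevé III Hamiltonian system with parameters v1, v2, η0, η∞ ∈ ℂ on an open set U ⊆ ℂ with 0 ∉ U, and let h(t) := t·H(t) + (2v1+1)²/8. Then for all t ∈ U: 8·(h(t) − t·h'(t)) = (4·q(t)·p(t) − 2v1 − 1)². -/
open Complex

/-- `(q, p, H)` solves the Painlevé III Hamiltonian system with parameters
`v1, v2, η0, ηinf` on an open set `U ⊆ ℂ` with `0 ∉ U`. -/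
def SolvesPIII (v1 v2 η0 ηinf : ℂ) (U : Set ℂ) (q p H : ℂ → ℂ) : Prop :=
  IsOpen U ∧ (0 : ℂ) ∉ U ∧
    DifferentiableOn ℂ q U ∧ DifferentiableOn ℂ p U ∧
    (∀ t ∈ U, t * H t =
      2 * q t ^ 2 * p t ^ 2
        - (2 * ηinf * t * q t ^ 2 + (2 * v1 + 1) * q t - 2 * η0 * t) * p t
        + ηinf * (v1 + v2) * t * q t) ∧
    (∀ t ∈ U, t * deriv q t =
      4 * q t ^ 2 * p t - 2 * ηinf * t * q t ^ 2 - (2 * v1 + 1) * q t + 2 * η0 * t) ∧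
    (∀ t ∈ U, t * deriv p t =
      -4 * q t * p t ^ 2 + 4 * ηinf * t * q t * p t + (2 * v1 + 1) * p t
        - ηinf * (v1 + v2) * t)

/-- For the auxiliary Hamiltonian `h(t) = tH(t) + (2v1+1)²/8` of Painlevé III,
`8(h − th') = (4qp − 2v1 − 1)²`. -/
theorem painleveIII_auxHamiltonian_sq (v1 v2 η0 ηinf : ℂ) (U : Set ℂ)
    (q p H h : ℂ → ℂ)
    (hsol : SolvesPIII v1 v2 η0 ηinf U q p H)
    (hdef : h = fun t => t * H t + (2 * v1 + 1) ^ 2 / 8) :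
    ∀ t ∈ U, 8 * (h t - t * deriv h t) = (4 * q t * p t - 2 * v1 - 1) ^ 2 := by
  obtain ⟨hopen, h0, hqdiff, hpdiff, hH, hq', hp'⟩ := hsol
  intro t htU
  have ht : t ≠ 0 := fun e => h0 (e ▸ htU)
  have hq : HasDerivAt q (deriv q t) t :=
    ((hqdiff.differentiableAt (hopen.mem_nhds htU)).hasDerivAt)
  have hp : HasDerivAt p (deriv p t) t :=
    ((hpdiff.differentiableAt (hopen.mem_nhds htU)).hasDerivAt)
  set dq := deriv q t with hdq
  set dp := deriv p t with hdp
  -- explicit local form of h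
  have hid : HasDerivAt (fun s : ℂ => s) 1 t := hasDerivAt_id t
  have hG := (((((hq.pow 2).const_mul 2).mul (hp.pow 2)).sub
      (((((hid.const_mul (2 * ηinf)).mul (hq.pow 2)).add
        (hq.const_mul (2 * v1 + 1))).sub (hid.const_mul (2 * η0))).mul hp)).add
      ((hid.const_mul (ηinf * (v1 + v2))).mul hq)).add_const ((2 * v1 + 1) ^ 2 / 8)
  have heq : h =ᶠ[nhds t] (fun s => 2 * q s ^ 2 * p s ^ 2
      - (2 * ηinf * s * q s ^ 2 + (2 * v1 + 1) * q s - 2 * η0 * s) * p s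
      + ηinf * (v1 + v2) * s * q s + (2 * v1 + 1) ^ 2 / 8) := by
    filter_upwards [hopen.mem_nhds htU] with s hs
    rw [hdef]
    simp only
    rw [hH s hs]
  have hderiv : deriv h t = _ := heq.deriv_eq.trans hG.deriv
  rw [hderiv, hdef]
  simp only [Pi.mul_apply, Pi.add_apply, Pi.sub_apply, Pi.pow_apply]
  have edq : dq = (4 * q t ^ 2 * p t - 2 * ηinf * t * q t ^ 2 - (2 * v1 + 1) * q t
      + 2 * η0 * t) / t := by
    rw [eq_div_iff ht]; linear_combination hq' t htU
  have edp : dp = (-4 * q t * p t ^ 2 + 4 * ηinf * t * q t * p t + (2 * v1 + 1) * p t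
      - ηinf * (v1 + v2) * t) / t := by
    rw [eq_div_iff ht]; linear_combination hp' t htU
  rw [hH t htU, edq, edp]
  field_simp
  ring
end

section
/- Let (q, p, H) solve the Painlevé III Hamiltonian system with parameters v1, v2, η0, η∞ ∈ ℂ on an open set U ⊆ ℂ with 0 ∉ U, and let h(t) := t·H(t) + (2v1+1)²/8. Then for all t ∈ U: (t·h''(t))² = 8·(h(t) − t·h'(t))·(h'(t) − 4·η0·p(t))². (This is the squared, radical-free form of the canonical-variable recovery formula 4η0·p = h' − ε·t·h''/√(8(h − t·h')).) -/
open Complex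

/-- Squared, radical-free form of the recovery formula
`4η0·p = h' − ε·th''/√(8(h − th'))` for the canonical variable `p` in terms of
the auxiliary Hamiltonian `h(t) = tH(t) + (2v1+1)²/8` of Painlevé III. -/
theorem painleveIII_recover_p (v1 v2 η0 ηinf : ℂ) (U : Set ℂ)
    (q p H h : ℂ → ℂ)
    (hsol : SolvesPIII v1 v2 η0 ηinf U q p H)
    (hdef : h = fun t => t * H t + (2 * v1 + 1) ^ 2 / 8) :
    ∀ t ∈ U,
      (t * deriv (deriv h) t) ^ 2 =
        8 * (h t - t * deriv h t) * (deriv h t - 4 * η0 * p t) ^ 2 := by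
  obtain ⟨hU, h0U, hqdiff, hpdiff, hHam, hqode, hpode⟩ := hsol
  subst hdef
  -- the candidate first derivative of h
  set F : ℂ → ℂ := fun u =>
    -2 * ηinf * (q u ^ 2 * p u) + 2 * η0 * p u + ηinf * (v1 + v2) * q u with hFdef
  have hne : ∀ s ∈ U, s ≠ 0 := fun s hs h => h0U (h ▸ hs)
  have hqD : ∀ s ∈ U, HasDerivAt q (deriv q s) s := fun s hs =>
    ((hqdiff s hs).differentiableAt (hU.mem_nhds hs)).hasDerivAt
  have hpD : ∀ s ∈ U, HasDerivAt p (deriv p s) s := fun s hs =>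
    ((hpdiff s hs).differentiableAt (hU.mem_nhds hs)).hasDerivAt
  have hqA : ∀ s ∈ U, deriv q s =
      (4 * q s ^ 2 * p s - 2 * ηinf * s * q s ^ 2 - (2 * v1 + 1) * q s + 2 * η0 * s) / s := by
    intro s hs
    rw [eq_div_iff (hne s hs)]
    linear_combination hqode s hs
  have hpB : ∀ s ∈ U, deriv p s =
      (-4 * q s * p s ^ 2 + 4 * ηinf * s * q s * p s + (2 * v1 + 1) * p s
        - ηinf * (v1 + v2) * s) / s := by
    intro s hs
    rw [eq_div_iff (hne s hs)]
    linear_combination hpode s hs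
  -- h has derivative F on U
  have key : ∀ s ∈ U, HasDerivAt (fun u => u * H u + (2 * v1 + 1) ^ 2 / 8) (F s) s := by
    intro s hs
    have hs0 := hne s hs
    have hqd := hqD s hs
    have hpd := hpD s hs
    have hq2 : HasDerivAt (fun u => q u ^ 2) (2 * q s * deriv q s) s := by
      simpa using hqd.fun_pow 2
    have hp2 : HasDerivAt (fun u => p u ^ 2) (2 * p s * deriv p s) s := by
      simpa using hpd.fun_pow 2
    have hT2 := ((((hasDerivAt_id' s).mul hq2).const_mul (2 * ηinf)).add
        (hqd.const_mul (2 * v1 + 1))).sub ((hasDerivAt_id' s).const_mul (2 * η0))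
    have hG := ((((hq2.mul hp2).const_mul (2 : ℂ)).sub (hT2.mul hpd)).add
        (((hasDerivAt_id' s).mul hqd).const_mul (ηinf * (v1 + v2)))).add_const
        ((2 * v1 + 1) ^ 2 / 8)
    have hG2 : HasDerivAt (fun u =>
        2 * (q u ^ 2 * p u ^ 2)
          - (2 * ηinf * (u * q u ^ 2) + (2 * v1 + 1) * q u - 2 * η0 * u) * p u
          + ηinf * (v1 + v2) * (u * q u) + (2 * v1 + 1) ^ 2 / 8) (F s) s := by
      convert hG using 1
      · rfl
      · rfl
      · funext u
        simp only [Pi.mul_apply, Pi.add_apply, Pi.sub_apply]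
      simp only [hFdef, Pi.mul_apply, Pi.add_apply, Pi.sub_apply]
      rw [hqA s hs, hpB s hs]
      field_simp
      ring
    refine hG2.congr_of_eventuallyEq ?_
    filter_upwards [hU.mem_nhds hs] with u hu
    linear_combination hHam u hu
  have hdh : ∀ s ∈ U, deriv (fun u => u * H u + (2 * v1 + 1) ^ 2 / 8) s = F s :=
    fun s hs => (key s hs).deriv
  intro t ht
  have ht0 := hne t ht
  have hqd := hqD t ht
  have hpd := hpD t ht
  have hq2 : HasDerivAt (fun u => q u ^ 2) (2 * q t * deriv q t) t := by
    simpa using hqd.fun_pow 2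
  -- derivative of F at t
  have hFD := (((hq2.mul hpd).const_mul (-2 * ηinf)).add
      (hpd.const_mul (2 * η0))).add (hqd.const_mul (ηinf * (v1 + v2)))
  have hev : deriv (fun u => u * H u + (2 * v1 + 1) ^ 2 / 8) =ᶠ[nhds t] F := by
    filter_upwards [hU.mem_nhds ht] with u hu
    exact hdh u hu
  have hdd : deriv (deriv (fun u => u * H u + (2 * v1 + 1) ^ 2 / 8)) t =
      -2 * ηinf * (2 * q t * deriv q t * p t + q t ^ 2 * deriv p t)
        + 2 * η0 * deriv p t + ηinf * (v1 + v2) * deriv q t := by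
    rw [hev.deriv_eq]
    exact hFD.deriv
  rw [hdd, hdh t ht]
  simp only [hFdef]
  rw [hqA t ht, hpB t ht, hHam t ht]
  field_simp
  ring
end

section
/- (Change of variables relating the Painlevé III auxiliary-Hamiltonian equation to the spectrum-singularity σ-equation.) Let a ∈ ℂ, let U ⊆ ℂ be open with 0 ∉ U, and let h, G : U → ℂ be complex-differentiable functions such that for all t ∈ U: G(t)² = 2·(h(t) − t·h'(t)) and (t·h''(t))² = 2·(h − t·h')·( 4(h')² + 32·(h − t·h') − 32·a·G + 16·a² ). Define V := {r ∈ ℂ : −i·r/4 ∈ U}, σ₁(r) := 2·h(−i·r/4) − a², and w(r) := G(−i·r/4). Then for all r ∈ V: w(r)² = a² + σ₁(r) − r·σ₁'(r) and (r·σ₁''(r))² + 4·(−a² − σ₁ + r·σ₁')·( (σ₁')² − (a − w)² ) = 0. -/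
open Complex

/-- Change of variables relating the Painlevé III auxiliary-Hamiltonian
equation (with `η0 = ηinf = 1`, `v1 = −a − 1/2`, `v2 = a + 1/2`, the square root
`√(2(h − th'))` realised by `G`) to the spectrum-singularity σ-equation, with
the square root `√(a² + σ₁ − rσ₁')` realised by `w`. -/
theorem auxHamiltonian_to_spectrumSingularity_sigma (a : ℂ) (U : Set ℂ)
    (hU : IsOpen U) (h0 : (0 : ℂ) ∉ U)
    (h G : ℂ → ℂ)
    (hdiff : DifferentiableOn ℂ h U)
    (hGdiff : DifferentiableOn ℂ G U)
    (hGsq : ∀ t ∈ U, G t ^ 2 = 2 * (h t - t * deriv h t))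
    (hode : ∀ t ∈ U,
      (t * deriv (deriv h) t) ^ 2 =
        2 * (h t - t * deriv h t) *
          (4 * (deriv h t) ^ 2 + 32 * (h t - t * deriv h t)
            - 32 * a * G t + 16 * a ^ 2))
    (V : Set ℂ) (hV : V = {r : ℂ | -Complex.I * r / 4 ∈ U})
    (σ₁ w : ℂ → ℂ)
    (hσ : σ₁ = fun r => 2 * h (-Complex.I * r / 4) - a ^ 2)
    (hw : w = fun r => G (-Complex.I * r / 4)) :
    ∀ r ∈ V,
      w r ^ 2 = a ^ 2 + σ₁ r - r * deriv σ₁ r ∧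
      (r * deriv (deriv σ₁) r) ^ 2 +
        4 * (-a ^ 2 - σ₁ r + r * deriv σ₁ r) *
          ((deriv σ₁ r) ^ 2 - (a - w r) ^ 2) = 0 := by
  have han : AnalyticOnNhd ℂ h U := hdiff.analyticOnNhd hU
  have han' : AnalyticOnNhd ℂ (deriv h) U := han.deriv
  have hVopen : IsOpen V := by
    rw [hV]
    exact hU.preimage (by fun_prop)
  -- derivative of σ₁ on V
  have hd1 : ∀ r ∈ V, HasDerivAt σ₁ (-Complex.I / 2 * deriv h (-Complex.I * r / 4)) r := by
    intro r hr
    rw [hV] at hr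
    have hlin : HasDerivAt (fun r : ℂ => -Complex.I * r / 4) (-Complex.I / 4) r := by
      simpa using ((hasDerivAt_id r).const_mul (-Complex.I)).div_const 4
    have hh : HasDerivAt h (deriv h (-Complex.I * r / 4)) (-Complex.I * r / 4) :=
      ((han _ hr).differentiableAt).hasDerivAt
    have := (hh.comp r hlin).const_mul (2 : ℂ)
    rw [hσ]
    have e : -Complex.I / 2 * deriv h (-Complex.I * r / 4) =
        2 * (deriv h (-Complex.I * r / 4) * (-Complex.I / 4)) := by ring
    rw [e]; exact this.sub_const (a ^ 2)
  have hderiv1 : Set.EqOn (deriv σ₁)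
      (fun r => -Complex.I / 2 * deriv h (-Complex.I * r / 4)) V := fun r hr =>
    (hd1 r hr).deriv
  -- second derivative
  have hd2 : ∀ r ∈ V, deriv (deriv σ₁) r =
      -(1 / 8) * deriv (deriv h) (-Complex.I * r / 4) := by
    intro r hr
    have heq : deriv σ₁ =ᶠ[nhds r]
        (fun r => -Complex.I / 2 * deriv h (-Complex.I * r / 4)) :=
      Filter.eventuallyEq_of_mem (hVopen.mem_nhds hr) hderiv1
    rw [heq.deriv_eq]
    have hr' : -Complex.I * r / 4 ∈ U := by rw [hV] at hr; exact hr
    have hlin : HasDerivAt (fun r : ℂ => -Complex.I * r / 4) (-Complex.I / 4) r := by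
      simpa using ((hasDerivAt_id r).const_mul (-Complex.I)).div_const 4
    have hh : HasDerivAt (deriv h) (deriv (deriv h) (-Complex.I * r / 4))
        (-Complex.I * r / 4) := ((han' _ hr').differentiableAt).hasDerivAt
    have key := ((hh.comp r hlin).const_mul (-Complex.I / 2)).deriv
    simp only [Function.comp_def] at key
    rw [key]
    have : Complex.I ^ 2 = -1 := Complex.I_sq
    linear_combination (deriv (deriv h) (-Complex.I * r / 4)) / 8 * this
  intro r hr
  have hr' : -Complex.I * r / 4 ∈ U := by rw [hV] at hr; exact hr
  set t : ℂ := -Complex.I * r / 4 with ht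
  have e1 : deriv σ₁ r = -Complex.I / 2 * deriv h t := hderiv1 hr
  have e2 : deriv (deriv σ₁) r = -(1 / 8) * deriv (deriv h) t := hd2 r hr
  have eσ : σ₁ r = 2 * h t - a ^ 2 := by rw [hσ]
  have ew : w r = G t := by rw [hw]
  have hG2 := hGsq t hr'
  have hO := hode t hr'
  have hI : Complex.I ^ 2 = -1 := Complex.I_sq
  constructor
  · rw [ew, e1, eσ, hG2, ht]; ring
  · rw [ew, e1, e2, eσ]
    have hrt : r = 4 * Complex.I * t := by
      rw [ht]; linear_combination r * hI
    rw [hrt]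
    linear_combination (-(1 / 4 : ℂ)) * hO + 8 * (h t - t * deriv h t) * hG2 +
      ((t * deriv (deriv h) t) ^ 2 / 4 - 2 * h t * (deriv h t) ^ 2
        - 2 * t * (deriv h t) ^ 3 * (Complex.I ^ 2 - 1)
        + 8 * t * deriv h t * (a - G t) ^ 2) * hI
end

section
/- (The spectrum-singularity σ-function is twice the Painlevé III Hamiltonian.) Let a ∈ ℂ and ε ∈ {1, −1}. Let (q, p, H) solve the Painlevé III Hamiltonian system with parameters v1 = −ε·a − 1/2, v2 = ε·a + 1/2, η0 = η∞ = 1 on an open set U ⊆ ℂ with 0 ∉ U. Define V := {r ∈ ℂ : −i·r/4 ∈ U} and σ₁(r) := 2·( t·H(t) ) evaluated at t = −i·r/4, i.e. σ₁(r) := 2·(−i·r/4)·H(−i·r/4). Then there exists a function w : V → ℂ such that for all r ∈ V: w(r)² = a² + σ₁(r) − r·σ₁'(r) and (r·σ₁''(r))² + 4·(−a² − σ₁ + r·σ₁')·( (σ₁')² − (a − w)² ) = 0; that is, σ₁ satisfies the second-order second-degree equation (r·σ₁'')² + 4·[−a² − σ₁ + r·σ₁']·{(σ₁')² − [a − √(a²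 + σ₁ − r·σ₁')]²} = 0 characterising the bulk-scaled spectrum-singularity gap probability. -/
open Complex

/-- The spectrum-singularity σ-function is twice the Painlevé III Hamiltonian:
for a solution of the Painlevé III Hamiltonian system with parameters
`v1 = −εa − 1/2`, `v2 = εa + 1/2`, `η0 = ηinf = 1`, the function
`σ₁(r) = 2tH(t)` at `t = −ir/4` satisfies the second-order second-degree
equation characterising the bulk-scaled spectrum-singularity gap probability,
with the square root `√(a² + σ₁ − rσ₁')` realised by a function `w`. -/
theorem spectrumSingularity_sigma_is_PIII_hamiltonian (a ε : ℂ)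
    (hε : ε = 1 ∨ ε = -1) (U : Set ℂ) (q p H : ℂ → ℂ)
    (hsol : SolvesPIII (-ε * a - 1 / 2) (ε * a + 1 / 2) 1 1 U q p H)
    (V : Set ℂ) (hV : V = {r : ℂ | -Complex.I * r / 4 ∈ U})
    (σ₁ : ℂ → ℂ)
    (hσ : σ₁ = fun r => 2 * (-Complex.I * r / 4) * H (-Complex.I * r / 4)) :
    ∃ w : ℂ → ℂ,
      ∀ r ∈ V,
        w r ^ 2 = a ^ 2 + σ₁ r - r * deriv σ₁ r ∧
        (r * deriv (deriv σ₁) r) ^ 2 +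
          4 * (-a ^ 2 - σ₁ r + r * deriv σ₁ r) *
            ((deriv σ₁ r) ^ 2 - (a - w r) ^ 2) = 0 := by
  obtain ⟨hU, hU0, hqd, hpd, hH, hq', hp'⟩ := hsol
  have hε2 : ε ^ 2 = 1 := by rcases hε with h | h <;> simp [h]
  have hVo : IsOpen V := by
    rw [hV]
    exact IsOpen.preimage (by fun_prop) hU
  have hne : ∀ u ∈ U, u ≠ 0 := fun u hu h0 => hU0 (h0 ▸ hu)
  have hqD : ∀ u ∈ U, HasDerivAt q (deriv q u) u := fun u hu =>
    (hqd.differentiableAt (hU.mem_nhds hu)).hasDerivAt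
  have hpD : ∀ u ∈ U, HasDerivAt p (deriv p u) u := fun u hu =>
    (hpd.differentiableAt (hU.mem_nhds hu)).hasDerivAt
  have hQ' : ∀ u ∈ U, deriv q u =
      (4 * q u ^ 2 * p u - 2 * u * q u ^ 2 + 2 * ε * a * q u + 2 * u) / u := by
    intro u hu
    rw [eq_div_iff (hne u hu)]
    linear_combination hq' u hu
  have hP' : ∀ u ∈ U, deriv p u =
      (-4 * q u * p u ^ 2 + 4 * u * q u * p u - 2 * ε * a * p u) / u := by
    intro u hu
    rw [eq_div_iff (hne u hu)]
    linear_combination hp' u hu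
  have hσval : ∀ x ∈ V, σ₁ x =
      2 * (2 * q (-Complex.I * x / 4) ^ 2 * p (-Complex.I * x / 4) ^ 2 -
        (2 * (-Complex.I * x / 4) * q (-Complex.I * x / 4) ^ 2
          - 2 * ε * a * q (-Complex.I * x / 4) - 2 * (-Complex.I * x / 4)) *
          p (-Complex.I * x / 4)) := by
    intro x hx
    have hx' : -Complex.I * x / 4 ∈ U := by rw [hV] at hx; exact hx
    rw [hσ]
    linear_combination 2 * hH (-Complex.I * x / 4) hx'
  have hT : ∀ s : ℂ, HasDerivAt (fun x : ℂ => -Complex.I * x / 4) (-Complex.I / 4) s := by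
    intro s
    simpa using ((hasDerivAt_id s).const_mul (-Complex.I)).div_const (4 : ℂ)
  have hQC : ∀ s : ℂ, -Complex.I * s / 4 ∈ U → HasDerivAt (fun x : ℂ => q (-Complex.I * x / 4))
      (deriv q (-Complex.I * s / 4) * (-Complex.I / 4)) s := by
    intro s hs'
    have h := HasDerivAt.comp s (hqD _ hs') (hT s)
    simpa [Function.comp_def] using h
  have hPC : ∀ s : ℂ, -Complex.I * s / 4 ∈ U → HasDerivAt (fun x : ℂ => p (-Complex.I * x / 4))
      (deriv p (-Complex.I * s / 4) * (-Complex.I / 4)) s := by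
    intro s hs'
    have h := HasDerivAt.comp s (hpD _ hs') (hT s)
    simpa [Function.comp_def] using h
  have hd1 : ∀ s ∈ V, deriv σ₁ s =
      Complex.I * p (-Complex.I * s / 4) * (q (-Complex.I * s / 4) ^ 2 - 1) := by
    intro s hs
    have hs' : -Complex.I * s / 4 ∈ U := by rw [hV] at hs; exact hs
    have hqc := hQC s hs'
    have hpc := hPC s hs'
    have hlin : HasDerivAt (fun x : ℂ => 2 * (-Complex.I * x / 4)) (2 * (-Complex.I / 4)) s :=
      (hT s).const_mul 2
    have hΦ := ((((hqc.pow 2).const_mul (2 : ℂ)).mul (hpc.pow 2)).sub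
      (((hlin.mul (hqc.pow 2)).sub (hqc.const_mul (2 * ε * a))).sub hlin |>.mul hpc)).const_mul
        (2 : ℂ)
    have hev : σ₁ =ᶠ[nhds s] (fun x =>
        2 * (2 * q (-Complex.I * x / 4) ^ 2 * p (-Complex.I * x / 4) ^ 2 -
          (2 * (-Complex.I * x / 4) * q (-Complex.I * x / 4) ^ 2
            - 2 * ε * a * q (-Complex.I * x / 4) - 2 * (-Complex.I * x / 4)) *
            p (-Complex.I * x / 4))) :=
      Filter.eventually_of_mem (hVo.mem_nhds hs) hσval
    rw [hev.deriv_eq]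
    refine hΦ.deriv.trans ?_
    simp only [Pi.pow_apply, Pi.mul_apply, Pi.sub_apply]
    rw [hQ' _ hs', hP' _ hs']
    have hne' := hne _ hs'
    field_simp
    ring
  refine ⟨fun s => a + 2 * ε * q (-Complex.I * s / 4) * p (-Complex.I * s / 4), ?_⟩
  intro r hr
  have hr' : -Complex.I * r / 4 ∈ U := by rw [hV] at hr; exact hr
  have hqc := hQC r hr'
  have hpc := hPC r hr'
  have hG := (hpc.const_mul Complex.I).mul ((hqc.pow 2).sub_const 1)
  have hev2 : deriv σ₁ =ᶠ[nhds r] (fun x =>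
      Complex.I * p (-Complex.I * x / 4) * (q (-Complex.I * x / 4) ^ 2 - 1)) :=
    Filter.eventually_of_mem (hVo.mem_nhds hr) hd1
  have hdd : deriv (deriv σ₁) r =
      (deriv p (-Complex.I * r / 4) * (q (-Complex.I * r / 4) ^ 2 - 1)
        + 2 * q (-Complex.I * r / 4) * deriv q (-Complex.I * r / 4) * p (-Complex.I * r / 4)) / 4 := by
    rw [hev2.deriv_eq]
    refine hG.deriv.trans ?_
    simp only [Pi.pow_apply]
    linear_combination (-(deriv p (-Complex.I * r / 4) * (q (-Complex.I * r / 4) ^ 2 - 1)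
        + 2 * q (-Complex.I * r / 4) * deriv q (-Complex.I * r / 4) * p (-Complex.I * r / 4)) / 4) *
      Complex.I_sq
  have h2key : r * deriv (deriv σ₁) r =
      2 * Complex.I * ε * p (-Complex.I * r / 4) * (q (-Complex.I * r / 4) ^ 2 + 1) *
        (a + 2 * ε * q (-Complex.I * r / 4) * p (-Complex.I * r / 4)) := by
    rw [hdd]
    linear_combination
      (Complex.I * (q (-Complex.I * r / 4) ^ 2 - 1)) * hp' (-Complex.I * r / 4) hr' +
      (2 * Complex.I * q (-Complex.I * r / 4) * p (-Complex.I * r / 4)) * hq' (-Complex.I * r / 4) hr' +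
      (-4 * Complex.I * q (-Complex.I * r / 4) * p (-Complex.I * r / 4) ^ 2 *
        (q (-Complex.I * r / 4) ^ 2 + 1)) * hε2 +
      (r * (deriv p (-Complex.I * r / 4) * (q (-Complex.I * r / 4) ^ 2 - 1)
        + 2 * q (-Complex.I * r / 4) * deriv q (-Complex.I * r / 4) * p (-Complex.I * r / 4)) / 4) *
        Complex.I_sq
  constructor
  · rw [hσval r hr, hd1 r hr]
    linear_combination (4 * q (-Complex.I * r / 4) ^ 2 * p (-Complex.I * r / 4) ^ 2) * hε2
  · rw [h2key, hσval r hr, hd1 r hr]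
    linear_combination
      (4 * p (-Complex.I * r / 4) ^ 2 *
        (a + 2 * ε * q (-Complex.I * r / 4) * p (-Complex.I * r / 4)) ^ 2 *
        (ε ^ 2 * (q (-Complex.I * r / 4) ^ 2 + 1) ^ 2 - (q (-Complex.I * r / 4) ^ 2 - 1) ^ 2)) *
        Complex.I_sq +
      (-4 * p (-Complex.I * r / 4) ^ 2 *
        (a + 2 * ε * q (-Complex.I * r / 4) * p (-Complex.I * r / 4)) ^ 2 *
        (q (-Complex.I * r / 4) ^ 2 - 1) ^ 2 +
        16 * q (-Complex.I * r / 4) ^ 2 * p (-Complex.I * r / 4) ^ 2 *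
          (Complex.I ^ 2 * p (-Complex.I * r / 4) ^ 2 * (q (-Complex.I * r / 4) ^ 2 - 1) ^ 2 -
            4 * ε ^ 2 * q (-Complex.I * r / 4) ^ 2 * p (-Complex.I * r / 4) ^ 2)) * hε2
end
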